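/- Let p ∈ (0,1), let t_1, …, t_k > 0, and let N ∈ ℤ_{≥0}. Suppose x* ∈ ℝ^k maximizes f(x) = Σ_{i=1}^k t_i (1 − p^{x_i}) over {x ∈ ℝ^k : x_i ≥ 0 for all i, Σ_{i=1}^k x_i = N}. Then there exists an integer assignment x ∈ ℤ_{≥0}^k with Σ_{i=1}^k x_i = N that maximizes f over all integer assignments with coordinate sum at most N and that satisfies x_i ≥ ⌊x*_i⌋ for every i. (This underlies the correctness of converting the continuous optimum to a discrete one by flooring and then greedily assigning the leftover agents.) -/

import Mathlib

/-- Expected total profit of an integer assignment. -/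
noncomputable def expProfit {k : ℕ} (p : ℝ) (t : Fin k → ℝ) (x : Fin k → ℕ) : ℝ :=
  ∑ i, t i * (1 - p ^ (x i))

/-- Objective of the continuous relaxation, with real exponents. -/
noncomputable def expProfitReal {k : ℕ} (p : ℝ) (t : Fin k → ℝ) (x : Fin k → ℝ) : ℝ :=
  ∑ i, t i * (1 - p ^ (x i))

/-- Split a sum over `Fin k` into the terms at `i ≠ j` plus the rest. -/
lemma pair_split_sum {k : ℕ} {M : Type*} [AddCommMonoid M] {i j : Fin k} (hij : i ≠ j)
    (F : Fin k → M) :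
    ∑ l, F l = F i + F j + ∑ l ∈ Finset.univ \ ({i, j} : Finset (Fin k)), F l := by
  have h := Finset.sum_sdiff (f := F) (Finset.subset_univ ({i, j} : Finset (Fin k)))
  rw [← h, Finset.sum_pair hij, add_comm]

lemma mem_sdiff_pair {k : ℕ} {i j l : Fin k}
    (hl : l ∈ Finset.univ \ ({i, j} : Finset (Fin k))) : l ≠ i ∧ l ≠ j := by
  simp only [Finset.mem_sdiff, Finset.mem_insert, Finset.mem_singleton] at hl
  exact ⟨fun h => hl.2 (Or.inl h), fun h => hl.2 (Or.inr h)⟩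

/-- Monotonicity of the discrete profit in each coordinate. -/
lemma expProfit_mono {k : ℕ} (p : ℝ) (hp0 : 0 < p) (hp1 : p < 1)
    (t : Fin k → ℝ) (ht : ∀ i, 0 < t i) {y z : Fin k → ℕ} (h : ∀ i, y i ≤ z i) :
    expProfit p t y ≤ expProfit p t z := by
  unfold expProfit
  refine Finset.sum_le_sum fun i _ => ?_
  have : p ^ z i ≤ p ^ y i :=
    pow_le_pow_of_le_one hp0.le hp1.le (h i)
  nlinarith [ht i]

section Main

variable {k : ℕ} {p : ℝ} (hp0 : 0 < p) (hp1 : p < 1)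
  {t : Fin k → ℝ} (ht : ∀ i, 0 < t i) {N : ℕ}
  {xstar : Fin k → ℝ} (hnonneg : ∀ i, 0 ≤ xstar i)
  (hsum : ∑ i, xstar i = N)
  (hmax : ∀ y : Fin k → ℝ, (∀ i, 0 ≤ y i) → (∑ i, y i = N) →
      expProfitReal p t y ≤ expProfitReal p t xstar)

include hp0 hp1 ht hnonneg hsum hmax in
/-- Key continuous exchange inequality. -/
lemma key_exchange {i j : Fin k} (hij : i ≠ j) {δ : ℝ} (hδ : 0 < δ) (hδj : δ ≤ xstar j) :
    t i * p ^ (xstar i) ≤ t j * p ^ (xstar j - δ) := by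
  set y : Fin k → ℝ := fun l => if l = i then xstar i + δ else if l = j then xstar j - δ else xstar l with hy
  have hyi : y i = xstar i + δ := by simp [hy]
  have hyj : y j = xstar j - δ := by simp [hy, hij.symm]
  have hyl : ∀ l, l ≠ i → l ≠ j → y l = xstar l := by intro l h1 h2; simp [hy, h1, h2]
  have hynn : ∀ l, 0 ≤ y l := by
    intro l
    rcases eq_or_ne l i with rfl | h1
    · rw [hyi]; have := hnonneg l; linarith
    · rcases eq_or_ne l j with rfl | h2
      · rw [hyj]; linarith
      · rw [hyl l h1 h2]; exact hnonneg l
  have hysum : ∑ l, y l = N := by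
    rw [pair_split_sum hij y, hyi, hyj,
      Finset.sum_congr rfl (fun l hl => hyl l (mem_sdiff_pair hl).1 (mem_sdiff_pair hl).2)]
    have := pair_split_sum hij xstar
    rw [← hsum, this]; ring
  have h := hmax y hynn hysum
  unfold expProfitReal at h
  rw [pair_split_sum hij (fun l => t l * (1 - p ^ y l)),
    pair_split_sum hij (fun l => t l * (1 - p ^ xstar l))] at h
  simp only [hyi, hyj] at h
  have hrest : ∑ l ∈ Finset.univ \ ({i, j} : Finset (Fin k)), t l * (1 - p ^ y l)
      = ∑ l ∈ Finset.univ \ ({i, j} : Finset (Fin k)), t l * (1 - p ^ xstar l) :=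
    Finset.sum_congr rfl (fun l hl => by
      rw [hyl l (mem_sdiff_pair hl).1 (mem_sdiff_pair hl).2])
  rw [hrest] at h
  have h2 : t i * (p ^ xstar i - p ^ (xstar i + δ)) ≤ t j * (p ^ (xstar j - δ) - p ^ xstar j) := by
    linarith
  have e1 : p ^ (xstar i + δ) = p ^ xstar i * p ^ δ := Real.rpow_add hp0 _ _
  have e2 : p ^ xstar j = p ^ (xstar j - δ) * p ^ δ := by
    rw [← Real.rpow_add hp0]; ring_nf
  have hpd : p ^ δ < 1 := Real.rpow_lt_one hp0.le hp1 hδ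
  have hpd0 : 0 < p ^ δ := Real.rpow_pos_of_pos hp0 δ
  have h3 : t i * p ^ xstar i * (1 - p ^ δ) ≤ t j * p ^ (xstar j - δ) * (1 - p ^ δ) := by
    rw [e1, e2] at h2; nlinarith
  exact (mul_le_mul_iff_of_pos_right (by linarith : (0:ℝ) < 1 - p ^ δ)).mp h3

include hp0 hp1 ht hnonneg hsum hmax in
/-- Discrete consequence: low coordinates beat high coordinates marginally. -/
lemma discrete_exchange {i j : Fin k} (hij : i ≠ j) {c b : ℕ}
    (hc : ⌊xstar i⌋₊ ≤ c) (hb : b + 1 ≤ ⌊xstar j⌋₊) :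
    t i * p ^ c ≤ t j * p ^ b := by
  have hfloorj : (⌊xstar j⌋₊ : ℝ) ≤ xstar j := Nat.floor_le (hnonneg j)
  have hb1 : (1 : ℝ) ≤ xstar j := by
    have : (1 : ℝ) ≤ (⌊xstar j⌋₊ : ℝ) := by exact_mod_cast Nat.one_le_iff_ne_zero.mpr (by omega)
    linarith
  set frac : ℝ := xstar i - ⌊xstar i⌋₊ with hfrac
  have hfrac0 : 0 ≤ frac := by
    have := Nat.floor_le (hnonneg i); simp [hfrac]; linarith
  have hfrac1 : frac < 1 := by
    have := Nat.lt_floor_add_one (xstar i); simp [hfrac]; linarith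
  have hkey := key_exchange hp0 hp1 ht hnonneg hsum hmax hij
    (δ := 1 - frac) (by linarith) (by linarith)
  -- multiply both sides by p ^ (-frac)
  have hmul := mul_le_mul_of_nonneg_right hkey
    (le_of_lt (Real.rpow_pos_of_pos hp0 (-frac)))
  have e1 : t i * p ^ xstar i * p ^ (-frac) = t i * p ^ ((⌊xstar i⌋₊ : ℝ)) := by
    rw [mul_assoc, ← Real.rpow_add hp0, hfrac]; ring_nf
  have e2 : t j * p ^ (xstar j - (1 - frac)) * p ^ (-frac) = t j * p ^ (xstar j - 1) := by
    rw [mul_assoc, ← Real.rpow_add hp0]; ring_nf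
  rw [e1, e2] at hmul
  have mono := fun {x y : ℝ} (h : x ≤ y) => Real.rpow_le_rpow_of_exponent_ge hp0 hp1.le h
  have l1 : t i * p ^ (c : ℝ) ≤ t i * p ^ ((⌊xstar i⌋₊ : ℝ)) :=
    mul_le_mul_of_nonneg_left (mono (by exact_mod_cast hc)) (ht i).le
  have l2 : t j * p ^ (xstar j - 1) ≤ t j * p ^ (b : ℝ) := by
    refine mul_le_mul_of_nonneg_left (mono ?_) (ht j).le
    have : (b : ℝ) + 1 ≤ (⌊xstar j⌋₊ : ℝ) := by exact_mod_cast hb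
    linarith
  have : t i * p ^ (c : ℝ) ≤ t j * p ^ (b : ℝ) := le_trans l1 (le_trans hmul l2)
  rwa [Real.rpow_natCast, Real.rpow_natCast] at this

include hp0 hp1 ht hnonneg hsum hmax in
/-- From any integer vector summing to `N`, reach one dominating the floors
without decreasing profit. Induction on the total deficit bound `n`. -/
lemma fix_deficit (n : ℕ) :
    ∀ y : Fin k → ℕ, (∑ i, y i = N) → (∑ i, (⌊xstar i⌋₊ - y i) ≤ n) →
      ∃ z : Fin k → ℕ, (∑ i, z i = N) ∧ (∀ i, ⌊xstar i⌋₊ ≤ z i) ∧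
        expProfit p t y ≤ expProfit p t z := by
  induction n with
  | zero =>
    intro y hyN hdef
    refine ⟨y, hyN, fun i => ?_, le_refl _⟩
    have h2 : ⌊xstar i⌋₊ - y i ≤ ∑ l, (⌊xstar l⌋₊ - y l) :=
      Finset.single_le_sum (f := fun l => ⌊xstar l⌋₊ - y l)
        (fun _ _ => Nat.zero_le _) (Finset.mem_univ i)
    omega
  | succ n ih =>
    intro y hyN hdef
    by_cases hall : ∀ i, ⌊xstar i⌋₊ ≤ y i
    · exact ⟨y, hyN, hall, le_refl _⟩
    push_neg at hall
    obtain ⟨j, hj⟩ := hall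
    -- find i ≠ j with y i > ⌊xstar i⌋₊
    have hmsum : ∑ i, ⌊xstar i⌋₊ ≤ N := by
      have : ((∑ i, ⌊xstar i⌋₊ : ℕ) : ℝ) ≤ (N : ℝ) := by
        push_cast
        rw [← hsum]
        exact Finset.sum_le_sum fun i _ => Nat.floor_le (hnonneg i)
      exact_mod_cast this
    have hex : ∃ i, i ≠ j ∧ ⌊xstar i⌋₊ < y i := by
      by_contra hcon
      push_neg at hcon
      have hle : ∀ i, i ≠ j → y i ≤ ⌊xstar i⌋₊ := fun i h => hcon i h
      have : ∑ i, y i < ∑ i, ⌊xstar i⌋₊ := by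
        refine Finset.sum_lt_sum (fun i _ => ?_) ⟨j, Finset.mem_univ j, hj⟩
        rcases eq_or_ne i j with rfl | h
        · omega
        · exact hle i h
      omega
    obtain ⟨i, hij, hi⟩ := hex
    -- move one agent from i to j
    set y' : Fin k → ℕ := fun l => if l = i then y i - 1 else if l = j then y j + 1 else y l with hy'
    have hy'i : y' i = y i - 1 := by simp [hy']
    have hy'j : y' j = y j + 1 := by simp [hy', hij.symm]
    have hy'l : ∀ l, l ≠ i → l ≠ j → y' l = y l := by intro l h1 h2; simp [hy', h1, h2]
    have hrest : ∀ (F : Fin k → ℕ → ℝ) (G : Fin k → ℕ → ℕ), True := fun _ _ => trivial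
    have hsum' : ∑ l, y' l = N := by
      have e3 : ∑ l, y' l = y' i + y' j
          + ∑ l ∈ Finset.univ \ ({i, j} : Finset (Fin k)), y' l := pair_split_sum hij _
      have e4 : ∑ l, y l = y i + y j
          + ∑ l ∈ Finset.univ \ ({i, j} : Finset (Fin k)), y l := pair_split_sum hij _
      have e5 : ∑ l ∈ Finset.univ \ ({i, j} : Finset (Fin k)), y' l
          = ∑ l ∈ Finset.univ \ ({i, j} : Finset (Fin k)), y l :=
        Finset.sum_congr rfl (fun l hl => hy'l l (mem_sdiff_pair hl).1 (mem_sdiff_pair hl).2)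
      omega
    have hdef' : ∑ l, (⌊xstar l⌋₊ - y' l) ≤ n := by
      have e3 : ∑ l, (⌊xstar l⌋₊ - y' l) = (⌊xstar i⌋₊ - y' i) + (⌊xstar j⌋₊ - y' j)
          + ∑ l ∈ Finset.univ \ ({i, j} : Finset (Fin k)), (⌊xstar l⌋₊ - y' l) :=
        pair_split_sum hij _
      have e4 : ∑ l, (⌊xstar l⌋₊ - y l) = (⌊xstar i⌋₊ - y i) + (⌊xstar j⌋₊ - y j)
          + ∑ l ∈ Finset.univ \ ({i, j} : Finset (Fin k)), (⌊xstar l⌋₊ - y l) :=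
        pair_split_sum hij _
      have e5 : ∑ l ∈ Finset.univ \ ({i, j} : Finset (Fin k)), (⌊xstar l⌋₊ - y' l)
          = ∑ l ∈ Finset.univ \ ({i, j} : Finset (Fin k)), (⌊xstar l⌋₊ - y l) :=
        Finset.sum_congr rfl (fun l hl => by
          rw [hy'l l (mem_sdiff_pair hl).1 (mem_sdiff_pair hl).2])
      omega
    have hprofit : expProfit p t y ≤ expProfit p t y' := by
      unfold expProfit
      rw [pair_split_sum hij (fun l => t l * (1 - p ^ y l)),
        pair_split_sum hij (fun l => t l * (1 - p ^ y' l))]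
      have hrest2 : ∑ l ∈ Finset.univ \ ({i, j} : Finset (Fin k)), t l * (1 - p ^ y' l)
          = ∑ l ∈ Finset.univ \ ({i, j} : Finset (Fin k)), t l * (1 - p ^ y l) :=
        Finset.sum_congr rfl (fun l hl => by
          rw [hy'l l (mem_sdiff_pair hl).1 (mem_sdiff_pair hl).2])
      rw [hrest2, hy'i, hy'j]
      have hx := discrete_exchange hp0 hp1 ht hnonneg hsum hmax hij
        (c := y i - 1) (b := y j) (by omega) (by omega)
      have e1 : p ^ y i = p ^ (y i - 1) * p := by
        rw [← pow_succ]; congr 1; omega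
      have e2 : p ^ (y j + 1) = p ^ y j * p := pow_succ p (y j)
      have goal : t i * (1 - p ^ (y i - 1)) + t j * (1 - p ^ (y j + 1))
          ≥ t i * (1 - p ^ y i) + t j * (1 - p ^ y j) := by
        rw [e1, e2]; nlinarith
      linarith
    obtain ⟨z, hz1, hz2, hz3⟩ := ih y' hsum' hdef'
    exact ⟨z, hz1, hz2, le_trans hprofit hz3⟩

end Main

/-- If `x*` maximizes the continuous relaxation over nonnegative real vectors
summing to `N`, then there is an integer assignment using all `N` agents that
maximizes the expected profit over all integer assignments with at most `N`
agents and dominates the floor of `x*` coordinatewise. -/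
theorem floor_then_greedy_correct (k : ℕ) (p : ℝ) (hp0 : 0 < p) (hp1 : p < 1)
    (t : Fin k → ℝ) (ht : ∀ i, 0 < t i) (N : ℕ)
    (xstar : Fin k → ℝ) (hnonneg : ∀ i, 0 ≤ xstar i)
    (hsum : ∑ i, xstar i = N)
    (hmax : ∀ y : Fin k → ℝ, (∀ i, 0 ≤ y i) → (∑ i, y i = N) →
      expProfitReal p t y ≤ expProfitReal p t xstar) :
    ∃ x : Fin k → ℕ, (∑ i, x i = N) ∧
      (∀ y : Fin k → ℕ, (∑ i, y i ≤ N) → expProfit p t y ≤ expProfit p t x) ∧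
      (∀ i, ⌊xstar i⌋ ≤ (x i : ℤ)) := by
  rcases Nat.eq_zero_or_pos k with rfl | hk
  · -- trivial: no tasks
    have hN : N = 0 := by simpa using hsum.symm
    refine ⟨fun i => 0, by simp [hN], ?_, fun i => i.elim0⟩
    intro y _
    simp [expProfit, Finset.univ_eq_empty]
  · set i0 : Fin k := ⟨0, hk⟩
    set m : Fin k → ℕ := fun i => ⌊xstar i⌋₊ with hm
    have hmsum : ∑ i, m i ≤ N := by
      have : ((∑ i, m i : ℕ) : ℝ) ≤ (N : ℝ) := by
        push_cast
        rw [← hsum]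
        exact Finset.sum_le_sum fun i _ => Nat.floor_le (hnonneg i)
      exact_mod_cast this
    -- candidate finite set
    set T : Finset (Fin k → ℕ) :=
      (Fintype.piFinset fun _ => Finset.range (N + 1)).filter
        (fun z => (∑ i, z i = N) ∧ ∀ i, m i ≤ z i) with hT
    have hmemT : ∀ z : Fin k → ℕ, (∑ i, z i = N) → (∀ i, m i ≤ z i) → z ∈ T := by
      intro z h1 h2
      rw [hT, Finset.mem_filter]
      refine ⟨?_, h1, h2⟩
      rw [Fintype.mem_piFinset]
      intro i
      rw [Finset.mem_range]
      have := Finset.single_le_sum (f := z) (fun i _ => Nat.zero_le _) (Finset.mem_univ i)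
      omega
    have hTne : T.Nonempty := by
      refine ⟨Function.update m i0 (m i0 + (N - ∑ i, m i)), hmemT _ ?_ ?_⟩
      · rw [Finset.sum_update_of_mem (Finset.mem_univ i0)]
        have e1 : m i0 + ∑ x ∈ Finset.univ \ {i0}, m x = ∑ i, m i := by
          rw [Finset.sdiff_singleton_eq_erase]
          exact Finset.add_sum_erase _ m (Finset.mem_univ i0)
        omega
      · intro i
        rcases eq_or_ne i i0 with rfl | h
        · simp
        · simp [Function.update_of_ne h]
    obtain ⟨x, hxT, hxmax⟩ := T.exists_max_image (expProfit p t) hTne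
    rw [hT, Finset.mem_filter] at hxT
    obtain ⟨-, hxN, hxm⟩ := hxT
    refine ⟨x, hxN, ?_, ?_⟩
    · intro y hy
      -- pad y to sum exactly N
      set y1 : Fin k → ℕ := Function.update y i0 (y i0 + (N - ∑ i, y i)) with hy1
      have hy1sum : ∑ i, y1 i = N := by
        rw [hy1, Finset.sum_update_of_mem (Finset.mem_univ i0)]
        have e1 : y i0 + ∑ x ∈ Finset.univ \ {i0}, y x = ∑ i, y i := by
          rw [Finset.sdiff_singleton_eq_erase]
          exact Finset.add_sum_erase _ y (Finset.mem_univ i0)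
        omega
      have hmono : expProfit p t y ≤ expProfit p t y1 := by
        refine expProfit_mono p hp0 hp1 t ht fun i => ?_
        rcases eq_or_ne i i0 with rfl | h
        · simp [hy1]
        · simp [hy1, Function.update_of_ne h]
      obtain ⟨z, hz1, hz2, hz3⟩ := fix_deficit hp0 hp1 ht hnonneg hsum hmax
        (∑ i, (m i - y1 i)) y1 hy1sum (le_refl _)
      have hzT : z ∈ T := hmemT z hz1 hz2
      exact le_trans hmono (le_trans hz3 (hxmax z hzT))
    · intro i
      have h1 : ((⌊xstar i⌋₊ : ℤ)) = ⌊xstar i⌋ := Int.natCast_floor_eq_floor (hnonneg i)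
      have h2 : ⌊xstar i⌋₊ ≤ x i := hxm i
      omega
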